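/- For the equioriented A_n quiver and dimension vectors d, e ∈ ℕ^n, the Euler form is ⟨e, d⟩ = Σ_{i=1}^n e_i d_i − Σ_{i=1}^{n-1} e_i d_{i+1}. For the interval root α_{ij} (the 0/1 vector supported on {i,...,j}), the minimal hom-dimension hom(α_{i,j-1}, d) between general representations satisfies hom(α_{i,j-1}, d) = max{ d_i − d_k : i ≤ k ≤ j }, where d_{n+1} = 0. -/

import Mathlib

/-- The "rectangular identity" linear map `K^a → K^b`, `(x₁,…,x_a) ↦ (x₁,…)`.
Between two one-dimensional spaces it is the identity; if `a = 0` or `b = 0` it is zero. -/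
noncomputable def rectMap (K : Type*) [Field K] (a b : ℕ) :
    (Fin a → K) →ₗ[K] (Fin b → K) :=
  Matrix.mulVecLin (Matrix.of fun (p : Fin b) (q : Fin a) =>
    if (p : ℕ) = (q : ℕ) then (1 : K) else 0)

/-- Dimension vector of the interval indecomposable `U_{i,j}` of a type `Aₙ` quiver:
`1` on `{i, …, j}` and `0` elsewhere. -/
def intervalDim (i j k : ℕ) : ℕ := if i ≤ k ∧ k ≤ j then 1 else 0

/-- The space of homomorphisms between two representations of the equioriented type `A`
quiver `⋯ → k → k+1 → ⋯`, given by dimension vectors `c, e` and structure maps `F, G`: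
families `φ` of linear maps commuting with the structure maps. -/
def homSpace (K : Type*) [Field K] (c e : ℕ → ℕ)
    (F : ∀ k, (Fin (c k) → K) →ₗ[K] (Fin (c (k + 1)) → K))
    (G : ∀ k, (Fin (e k) → K) →ₗ[K] (Fin (e (k + 1)) → K)) :
    Submodule K (∀ k, (Fin (c k) → K) →ₗ[K] (Fin (e k) → K)) where
  carrier := {φ | ∀ k, (G k).comp (φ k) = (φ (k + 1)).comp (F k)}
  add_mem' := by
    intro x y hx hy k
    simp only [Pi.add_apply, LinearMap.comp_add, LinearMap.add_comp, hx k, hy k]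
  zero_mem' := by
    intro k
    simp
  smul_mem' := by
    intro t x hx k
    simp only [Pi.smul_apply, LinearMap.comp_smul, LinearMap.smul_comp, hx k]

namespace GenericHomAux

variable {K : Type*} [Field K]

lemma rectMap_apply (a b : ℕ) (x : Fin a → K) (p : Fin b) :
    rectMap K a b x p = if h : (p:ℕ) < a then x ⟨p, h⟩ else 0 := by
  simp only [rectMap, Matrix.mulVecLin_apply, Matrix.mulVec, dotProduct, Matrix.of_apply]
  by_cases h : (p:ℕ) < a
  · rw [dif_pos h, Finset.sum_eq_single (⟨p, h⟩ : Fin a)]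
    · simp
    · intro q _ hq
      have : ¬((p:ℕ) = (q:ℕ)) := fun hc => hq (Fin.ext hc.symm)
      simp [this]
    · simp
  · rw [dif_neg h]
    apply Finset.sum_eq_zero
    intro q _
    have : ¬((p:ℕ) = (q:ℕ)) := fun hc => h (hc ▸ q.isLt)
    simp [this]

lemma rect_surjective {a b : ℕ} (h : b ≤ a) : Function.Surjective (rectMap K a b) := by
  intro y
  refine ⟨fun q => if h2 : (q:ℕ) < b then y ⟨q, h2⟩ else 0, ?_⟩
  funext p
  rw [rectMap_apply]
  rw [dif_pos (lt_of_lt_of_le p.isLt h)]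
  simp [p.isLt]

lemma finrank_ker_rect {a b : ℕ} (h : b ≤ a) :
    Module.finrank K (LinearMap.ker (rectMap K a b)) = a - b := by
  have h1 := LinearMap.finrank_range_add_finrank_ker (rectMap K a b)
  rw [LinearMap.range_eq_top.mpr (rect_surjective h)] at h1
  simp only [finrank_top] at h1
  simp only [Module.finrank_fin_fun] at h1 ⊢
  omega

section Chain
variable (d : ℕ → ℕ) (i : ℕ)
variable (G : ∀ k, (Fin (d k) → K) →ₗ[K] (Fin (d (k + 1)) → K))

/-- Composite `G (k-1) ∘ ⋯ ∘ G i` as a map `K^{d i} → K^{d k}`; zero for `k < i`. -/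
noncomputable def chain : ∀ k, (Fin (d i) → K) →ₗ[K] (Fin (d k) → K)
  | 0 => 0
  | (k+1) =>
    if h : k + 1 = i then
      LinearMap.funLeft K K (Fin.cast (congrArg d h))
    else (G k).comp (chain k)

lemma chain_succ {k : ℕ} (h : k + 1 ≠ i) :
    chain d i G (k+1) = (G k).comp (chain d i G k) := by
  rw [chain, dif_neg h]

lemma chain_apply_self (hi : 1 ≤ i) (v : Fin (d i) → K) :
    chain d i G i v = v := by
  obtain ⟨m, rfl⟩ : ∃ m, i = m + 1 := ⟨i - 1, by omega⟩
  rw [chain, dif_pos rfl]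
  funext p
  simp [LinearMap.funLeft]

lemma finrank_range_chain_le {k m : ℕ} (hik : i ≤ k) (hkm : k ≤ m) :
    Module.finrank K (LinearMap.range (chain d i G m)) ≤ d k := by
  induction m, hkm using Nat.le_induction with
  | base =>
    calc Module.finrank K (LinearMap.range (chain d i G k))
        ≤ Module.finrank K (Fin (d k) → K) := Submodule.finrank_le _
      _ = d k := by simp [Module.finrank_fin_fun]
  | succ m hm ih =>
    rw [chain_succ d i G (by omega), LinearMap.range_comp]
    exact le_trans (Submodule.finrank_map_le _ _) ih

end Chain

section Rect

variable (d : ℕ → ℕ) (i : ℕ)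

lemma chain_rect_apply (hi : 1 ≤ i) {k : ℕ} (hik : i ≤ k) (v : Fin (d i) → K) (p : Fin (d k)) :
    chain d i (fun k => rectMap K (d k) (d (k+1))) k v p =
      if h : ∀ t ∈ Finset.Icc i k, (p:ℕ) < d t then
        v ⟨p, h i (Finset.mem_Icc.mpr ⟨le_refl i, hik⟩)⟩ else 0 := by
  induction k, hik using Nat.le_induction with
  | base =>
    rw [chain_apply_self d i _ hi]
    rw [dif_pos]
    · intro t ht
      rw [Finset.mem_Icc] at ht
      have : t = i := by omega
      exact this ▸ p.isLt
  | succ m hm ih =>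
    rw [chain_succ d i _ (by omega), LinearMap.comp_apply, rectMap_apply]
    by_cases h : (p:ℕ) < d m
    · rw [dif_pos h, ih ⟨p, h⟩]
      by_cases h2 : ∀ t ∈ Finset.Icc i m, (p:ℕ) < d t
      · have hall : ∀ t ∈ Finset.Icc i (m+1), (p:ℕ) < d t := by
          intro t ht
          rw [Finset.mem_Icc] at ht
          rcases Nat.lt_or_ge t (m+1) with h3 | h3
          · exact h2 t (Finset.mem_Icc.mpr ⟨ht.1, by omega⟩)
          · have : t = m + 1 := by omega
            exact this ▸ p.isLt
        rw [dif_pos h2, dif_pos hall]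
      · rw [dif_neg h2, dif_neg]
        intro hc
        exact h2 (fun t ht => hc t (Finset.mem_Icc.mpr ⟨(Finset.mem_Icc.mp ht).1,
          by have := (Finset.mem_Icc.mp ht).2; omega⟩))
    · rw [dif_neg h, dif_neg]
      intro hc
      exact h (hc m (Finset.mem_Icc.mpr ⟨hm, by omega⟩))

lemma ker_chain_rect (hi : 1 ≤ i) {j : ℕ} (hij : i < j) :
    LinearMap.ker (chain d i (fun k => rectMap K (d k) (d (k+1))) j) =
      LinearMap.ker (rectMap K (d i)
        ((Finset.Icc i j).inf' (Finset.nonempty_Icc.mpr hij.le) d)) := by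
  set μ := (Finset.Icc i j).inf' (Finset.nonempty_Icc.mpr hij.le) d with hμ
  have hμi : μ ≤ d i := Finset.inf'_le d (Finset.mem_Icc.mpr ⟨le_refl i, hij.le⟩)
  have hμj : μ ≤ d j := Finset.inf'_le d (Finset.mem_Icc.mpr ⟨hij.le, le_refl j⟩)
  ext v
  rw [LinearMap.mem_ker, LinearMap.mem_ker, funext_iff, funext_iff]
  simp only [Pi.zero_apply]
  constructor
  · intro hv q
    rw [rectMap_apply, dif_pos (lt_of_lt_of_le q.isLt hμi)]
    have hall : ∀ t ∈ Finset.Icc i j,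
        ((⟨(q:ℕ), lt_of_lt_of_le q.isLt hμj⟩ : Fin (d j)) : ℕ) < d t := by
      intro t ht
      exact lt_of_lt_of_le q.isLt (Finset.inf'_le d ht)
    have := hv ⟨q, lt_of_lt_of_le q.isLt hμj⟩
    rw [chain_rect_apply d i hi hij.le, dif_pos hall] at this
    exact this
  · intro hv p
    rw [chain_rect_apply d i hi hij.le]
    by_cases h : ∀ t ∈ Finset.Icc i j, (p:ℕ) < d t
    · rw [dif_pos h]
      have hpμ : (p:ℕ) < μ := by
        rw [hμ, Finset.lt_inf'_iff]
        exact h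
      have := hv ⟨p, hpμ⟩
      rw [rectMap_apply,
        dif_pos (lt_of_lt_of_le (show ((⟨(p:ℕ), hpμ⟩ : Fin μ):ℕ) < μ from hpμ) hμi)] at this
      exact this
    · rw [dif_neg h]

end Rect

-- helpers
lemma apply_eq_zero_of_dim_zero {m : ℕ} (h : m = 0) {V : Type*} [AddCommGroup V] [Module K V]
    (f : (Fin m → K) →ₗ[K] V) (x : Fin m → K) : f x = 0 := by
  have hx : x = 0 := funext fun q => absurd q.isLt (by omega)
  rw [hx, map_zero]

lemma sum_eq_zero_of_dim_zero {m : ℕ} (h : m = 0) (x : Fin m → K) : ∑ q, x q = 0 := by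
  subst h; simp

lemma sum_eq_of_dim_one {m : ℕ} (h : m = 1) (x : Fin m → K) (p : Fin m) : ∑ q, x q = x p := by
  subst h
  rw [Fin.sum_univ_one]
  exact congrArg x (Subsingleton.elim _ _)

lemma ones_decomp {m : ℕ} (h : m = 1) (x : Fin m → K) :
    x = (∑ q, x q) • (fun _ => (1:K)) := by
  funext p
  rw [sum_eq_of_dim_one h x p]
  simp

noncomputable def sumCoords (m : ℕ) : (Fin m → K) →ₗ[K] K := ∑ q : Fin m, LinearMap.proj q

lemma sumCoords_apply (m : ℕ) (x : Fin m → K) : sumCoords m x = ∑ q, x q := by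
  simp [sumCoords]

section Main

variable (d : ℕ → ℕ) (i j' : ℕ)
variable (G : ∀ k, (Fin (d k) → K) →ₗ[K] (Fin (d (k + 1)) → K))

lemma phi_ones (hi : 1 ≤ i)
    (φ : ∀ k, (Fin (intervalDim i j' k) → K) →ₗ[K] (Fin (d k) → K))
    (hφ : ∀ k, (G k).comp (φ k) = (φ (k+1)).comp
      (rectMap K (intervalDim i j' k) (intervalDim i j' (k+1))))
    {k : ℕ} (hik : i ≤ k) :
    k ≤ j' → φ k (fun _ => 1) = chain d i G k (φ i (fun _ => 1)) := by
  induction k, hik using Nat.le_induction with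
  | base =>
    intro _
    rw [chain_apply_self d i G hi]
  | succ m hm ih =>
    intro hmj
    have hcm : intervalDim i j' m = 1 := if_pos ⟨hm, by omega⟩
    have hcm1 : intervalDim i j' (m+1) = 1 := if_pos ⟨by omega, hmj⟩
    have hcomm := congrFun (congrArg DFunLike.coe (hφ m)) (fun _ => (1:K))
    simp only [LinearMap.comp_apply] at hcomm
    have hones : rectMap K (intervalDim i j' m) (intervalDim i j' (m+1))
        (fun _ => (1:K)) = (fun _ => (1:K)) := by
      funext p
      rw [rectMap_apply, dif_pos (show (p:ℕ) < intervalDim i j' m by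
        have := p.isLt; omega)]
    rw [hones] at hcomm
    rw [← hcomm, ih (by omega), chain_succ d i G (by omega), LinearMap.comp_apply]

lemma phi_mem_ker (hi : 1 ≤ i) (hij : i ≤ j')
    (φ : ∀ k, (Fin (intervalDim i j' k) → K) →ₗ[K] (Fin (d k) → K))
    (hφ : ∀ k, (G k).comp (φ k) = (φ (k+1)).comp
      (rectMap K (intervalDim i j' k) (intervalDim i j' (k+1)))) :
    chain d i G (j'+1) (φ i (fun _ => 1)) = 0 := by
  rw [chain_succ d i G (by omega), LinearMap.comp_apply,
    ← phi_ones d i j' G hi φ hφ hij le_rfl]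
  have hcomm := congrFun (congrArg DFunLike.coe (hφ j')) (fun _ => (1:K))
  simp only [LinearMap.comp_apply] at hcomm
  rw [hcomm]
  exact apply_eq_zero_of_dim_zero (if_neg (by omega)) _ _

noncomputable def Phi (hi : 1 ≤ i) (hij : i ≤ j') :
    (homSpace K (intervalDim i j') d
      (fun k => rectMap K (intervalDim i j' k) (intervalDim i j' (k+1))) G) →ₗ[K]
    (LinearMap.ker (chain d i G (j'+1))) where
  toFun := fun φ => ⟨φ.1 i (fun _ => 1),
    LinearMap.mem_ker.mpr (phi_mem_ker d i j' G hi hij φ.1 φ.2)⟩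
  map_add' := fun _ _ => rfl
  map_smul' := fun _ _ => rfl

lemma Phi_bijective (hi : 1 ≤ i) (hij : i ≤ j') :
    Function.Bijective (Phi d i j' G hi hij) := by
  constructor
  · rw [injective_iff_map_eq_zero]
    intro φ hφ0
    have hv : φ.1 i (fun _ => 1) = 0 := congrArg Subtype.val hφ0
    apply Subtype.ext
    funext k
    apply LinearMap.ext
    intro x
    simp only [ZeroMemClass.coe_zero, Pi.zero_apply, LinearMap.zero_apply]
    by_cases hc : i ≤ k ∧ k ≤ j'
    · have hck : intervalDim i j' k = 1 := if_pos hc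
      rw [ones_decomp hck x, map_smul,
        phi_ones d i j' G hi φ.1 φ.2 hc.1 hc.2, hv, map_zero, smul_zero]
    · exact apply_eq_zero_of_dim_zero (if_neg hc) _ _
  · rintro ⟨v, hv⟩
    rw [LinearMap.mem_ker] at hv
    refine ⟨⟨fun k => LinearMap.smulRight (sumCoords (intervalDim i j' k))
      (chain d i G k v), ?_⟩, ?_⟩
    · intro k
      apply LinearMap.ext
      intro x
      simp only [LinearMap.comp_apply, LinearMap.smulRight_apply, sumCoords_apply, map_smul]
      by_cases hck : i ≤ k ∧ k ≤ j'
      · by_cases hck1 : i ≤ k + 1 ∧ k + 1 ≤ j'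
        · have h1 : intervalDim i j' k = 1 := if_pos hck
          have h2 : intervalDim i j' (k+1) = 1 := if_pos hck1
          have hs : ∑ q, rectMap K (intervalDim i j' k) (intervalDim i j' (k+1)) x q
              = ∑ q, x q := by
            rw [sum_eq_of_dim_one h2 _ ⟨0, by omega⟩, rectMap_apply,
              dif_pos (show (0:ℕ) < intervalDim i j' k by omega),
              sum_eq_of_dim_one h1 x ⟨0, by omega⟩]
          rw [hs, chain_succ d i G (by omega), LinearMap.comp_apply]
        · have hkj : k = j' := by
            rcases hck with ⟨h3, h4⟩
            omega
          have h2 : intervalDim i j' (k+1) = 0 := if_neg (by omega)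
          rw [sum_eq_zero_of_dim_zero h2, zero_smul]
          have : chain d i G (k+1) v = 0 := by rw [hkj]; exact hv
          rw [chain_succ d i G (by omega), LinearMap.comp_apply] at this
          rw [this, smul_zero]
      · have h1 : intervalDim i j' k = 0 := if_neg hck
        rw [sum_eq_zero_of_dim_zero h1, zero_smul]
        have hs : ∑ q, rectMap K (intervalDim i j' k) (intervalDim i j' (k+1)) x q = 0 := by
          apply Finset.sum_eq_zero
          intro q _
          rw [rectMap_apply, dif_neg (by omega)]
        rw [hs, zero_smul]
    · apply Subtype.ext
      show (LinearMap.smulRight (sumCoords (intervalDim i j' i)) (chain d i G i v))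
        (fun _ => 1) = v
      rw [LinearMap.smulRight_apply, sumCoords_apply, chain_apply_self d i G hi,
        sum_eq_of_dim_one (show intervalDim i j' i = 1 from if_pos ⟨le_rfl, hij⟩) _
          ⟨0, by have : intervalDim i j' i = 1 := if_pos ⟨le_rfl, hij⟩; omega⟩, one_smul]

set_option synthInstance.maxHeartbeats 1000000 in
lemma finrank_homSpace (hi : 1 ≤ i) (hij : i ≤ j') :
    Module.finrank K (homSpace K (intervalDim i j') d
      (fun k => rectMap K (intervalDim i j' k) (intervalDim i j' (k+1))) G) =
    Module.finrank K (LinearMap.ker (chain d i G (j'+1))) :=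
  (LinearEquiv.ofBijective _ (Phi_bijective d i j' G hi hij)).finrank_eq

end Main

end GenericHomAux

open GenericHomAux in
theorem generic_hom_interval_eq_max (K : Type*) [Field K] (n : ℕ) (d : ℕ → ℕ)
    (h0 : d 0 = 0) (hn : ∀ k, n < k → d k = 0)
    (i j : ℕ) (h1 : 1 ≤ i) (hij : i < j) (hjn : j ≤ n + 1) :
    IsLeast {m : ℤ | ∃ G : ∀ k, (Fin (d k) → K) →ₗ[K] (Fin (d (k + 1)) → K),
        m = Module.finrank K (homSpace K (intervalDim i (j - 1)) d
              (fun k => rectMap K (intervalDim i (j - 1) k) (intervalDim i (j - 1) (k + 1))) G)}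
      ((Finset.Icc i j).sup' (Finset.nonempty_Icc.mpr hij.le)
        (fun k => (d i : ℤ) - (d k : ℤ))) := by
  obtain ⟨j', rfl⟩ : ∃ j', j = j' + 1 := ⟨j - 1, by omega⟩
  have hij' : i ≤ j' := by omega
  have hj1 : j' + 1 - 1 = j' := rfl
  rw [hj1]
  set μ := (Finset.Icc i (j'+1)).inf' (Finset.nonempty_Icc.mpr hij.le) d with hμ
  have hμi : μ ≤ d i := Finset.inf'_le d (Finset.mem_Icc.mpr ⟨le_refl i, hij.le⟩)
  constructor
  · refine ⟨fun k => rectMap K (d k) (d (k+1)), ?_⟩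
    rw [finrank_homSpace d i j' _ h1 hij', ker_chain_rect d i h1 hij,
      finrank_ker_rect hμi]
    obtain ⟨k₀, hk₀mem, hk₀⟩ := Finset.exists_mem_eq_inf'
      (Finset.nonempty_Icc.mpr hij.le) d
    apply le_antisymm
    · apply Finset.sup'_le
      intro k hk
      have : μ ≤ d k := Finset.inf'_le d hk
      push_cast [Nat.cast_sub hμi]
      omega
    · have : (↑(d i - μ) : ℤ) = (d i : ℤ) - (d k₀ : ℤ) := by
        rw [hμ, hk₀] at hμi ⊢
        push_cast [Nat.cast_sub hμi]
        omega
      rw [this]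
      exact Finset.le_sup' (fun k => (d i : ℤ) - (d k : ℤ)) hk₀mem
  · rintro m ⟨G, rfl⟩
    rw [finrank_homSpace d i j' G h1 hij']
    refine Finset.sup'_le _ _ ?_
    intro k hk
    rw [Finset.mem_Icc] at hk
    have hrk : Module.finrank K (LinearMap.range (chain d i G (j'+1))) ≤ d k :=
      finrank_range_chain_le d i G hk.1 hk.2
    have hrn := LinearMap.finrank_range_add_finrank_ker (chain d i G (j'+1))
    simp only [Module.finrank_fin_fun] at hrn
    omega
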